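/- Let Y be a projective k-variety and let ψ: Y → Bir(P^n) be a morphism. Then the image ψ(Y) is closed in Bir(P^n) for the Zariski topology. -/

import Mathlib

open MvPolynomial

/-- The rational function field `k(z_1,…,z_n)`, realized as the fraction field of the
polynomial ring in `n` variables over `k`. -/
abbrev RatFunField (k : Type) [Field k] (n : ℕ) : Type :=
  FractionRing (MvPolynomial (Fin n) k)

/-- The Cremona group `Bir(ℙⁿ)`, realized as the group of `k`-algebra automorphisms of
the rational function field `k(z_1,…,z_n)`. -/
abbrev Cremona (k : Type) [Field k] (n : ℕ) : Type :=
  RatFunField k n ≃ₐ[k] RatFunField k n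

variable (k : Type) [Field k]

/-- The coordinate function `z_{j+1}` of `k(z_1,…,z_n)`. -/
noncomputable def zCoord (n : ℕ) (j : Fin n) : RatFunField k n :=
  algebraMap (MvPolynomial (Fin n) k) (RatFunField k n) (X j)

/-- Dehomogenization: `g(x_0,…,x_n) ↦ g(1, z_1, …, z_n)`. -/
noncomputable def dehom (n : ℕ) : MvPolynomial (Fin (n + 1)) k →ₐ[k] RatFunField k n :=
  aeval (Fin.cons 1 (zCoord k n))

/-- `g = (g_0,…,g_n)` is a representation of the Cremona transformation `f` by homogeneous
polynomials of degree `d`: the `g_i` are homogeneous of degree `d`, `g_0 ≠ 0`, and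
`f(z_j) = g_j(1,z_1,…,z_n)/g_0(1,z_1,…,z_n)` for all `j`. -/
def Represents (n : ℕ) (f : Cremona k n) (d : ℕ)
    (g : Fin (n + 1) → MvPolynomial (Fin (n + 1)) k) : Prop :=
  (∀ i, (g i).IsHomogeneous d) ∧ g 0 ≠ 0 ∧
    ∀ j : Fin n, f (zCoord k n j) * dehom k n (g 0) = dehom k n (g j.succ)

/-- The (algebraic) degree of a Cremona transformation: the least `d ≥ 1` such that `f`
admits a representation by homogeneous polynomials of degree `d` (without common factor,
which is automatic at the minimal degree). -/
noncomputable def cdeg (n : ℕ) (f : Cremona k n) : ℕ :=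
  sInf {d | 1 ≤ d ∧ ∃ g, Represents k n f d g}

/-- An affine `k`-variety: the maximal spectrum (= set of `k`-points) of a finitely
generated `k`-algebra `A`. -/
structure AffSource (k : Type) [Field k] : Type 1 where
  A : Type
  [cr : CommRing A]
  [alg : Algebra k A]
  [ft : Algebra.FiniteType k A]

attribute [instance] AffSource.cr AffSource.alg AffSource.ft

/-- The points (with residue field `k`) of an affine `k`-variety, i.e. the `k`-algebra
homomorphisms `A → k`; by the Nullstellensatz these correspond to the maximal ideals. -/
abbrev AffSource.Pts (S : AffSource k) : Type := S.A →ₐ[k] k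

/-- The Zariski topology on the points of an affine variety, induced from the Zariski
topology of the prime spectrum via `t ↦ ker t`. -/
noncomputable instance AffSource.ptsTopology (S : AffSource k) : TopologicalSpace S.Pts :=
  TopologicalSpace.induced
    (fun t : S.Pts =>
      (⟨RingHom.ker (t : S.A →+* k), RingHom.ker_isPrime _⟩ : PrimeSpectrum S.A))
    inferInstance

/-- `φ` is given by the polynomial family `F = (F_0,…,F_n)`, homogeneous of common degree
`ℓ` in `x_0,…,x_n` with coefficients in `A`, on the basic open subset `D(a)`: for every
point `t` with `a(t) ≠ 0`, the evaluated polynomials `F_i(t,·)` are not all zero and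
`φ_t(z_j)·F_0(t,1,z_1,…,z_n) = F_j(t,1,z_1,…,z_n)` for all `j`. -/
def IsFamilyOn (n : ℕ) (S : AffSource k) (φ : S.Pts → Cremona k n) (a : S.A)
    (ℓ : ℕ) (F : Fin (n + 1) → MvPolynomial (Fin (n + 1)) S.A) : Prop :=
  (∀ i, (F i).IsHomogeneous ℓ) ∧
    ∀ t : S.Pts, t a ≠ 0 →
      (∃ i, MvPolynomial.map (t : S.A →+* k) (F i) ≠ 0) ∧
        ∀ j : Fin n,
          φ t (zCoord k n j) * dehom k n (MvPolynomial.map (t : S.A →+* k) (F 0)) =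
            dehom k n (MvPolynomial.map (t : S.A →+* k) (F j.succ))

/-- A morphism `T → Bir(ℙⁿ)` from an affine `k`-variety `T`: a map which, locally on a
cover of `T` by basic open subsets, is given by a polynomial family of Cremona
transformations. -/
def IsMorphism (n : ℕ) (S : AffSource k) (φ : S.Pts → Cremona k n) : Prop :=
  ∀ t : S.Pts, ∃ a : S.A, t a ≠ 0 ∧ ∃ ℓ F, IsFamilyOn k n S φ a ℓ F

/-- The Zariski topology on the Cremona group: the finest topology making every morphism
from a `k`-variety to `Bir(ℙⁿ)` continuous.  (A subset is closed if and only if its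
preimage under every such morphism is closed.) -/
noncomputable instance cremonaTopology (n : ℕ) : TopologicalSpace (Cremona k n) :=
  ⨆ (S : AffSource k) (φ : { φ : S.Pts → Cremona k n // IsMorphism k n S φ }),
    TopologicalSpace.coinduced φ.1 inferInstance

/-- The Zariski topology on affine `N`-space `k^N`. -/
noncomputable instance affSpaceTopology (N : ℕ) : TopologicalSpace (Fin N → k) :=
  ⨆ p : MvPolynomial (Fin N) k,
    TopologicalSpace.induced (fun v => CofiniteTopology.of (eval v p)) inferInstance

/-- The Zariski topology on projective `N`-space `ℙᴺ(k)`. -/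
noncomputable instance projSpaceTopology (N : ℕ) :
    TopologicalSpace (Projectivization k (Fin (N + 1) → k)) :=
  TopologicalSpace.coinduced (Projectivization.mk' k) inferInstance

/-- `ψ` restricted to the subvariety `Z ⊆ ℙᴺ(k)` is a morphism to `Bir(ℙⁿ)`: around
every point of `Z` there are a homogeneous polynomial `a` not vanishing at that point
and a polynomial family whose coefficients are homogeneous polynomials on `k^{N+1}` of
the same degree as `a`, which defines `ψ` at all points of `Z` where `a` does not
vanish. -/
def IsProjMorphismOn (n N : ℕ) (Z : Set (Projectivization k (Fin (N + 1) → k)))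
    (ψ : Projectivization k (Fin (N + 1) → k) → Cremona k n) : Prop :=
  ∀ z ∈ Z, ∃ (r ℓ : ℕ) (a : MvPolynomial (Fin (N + 1)) k)
      (F : Fin (n + 1) → MvPolynomial (Fin (n + 1)) (MvPolynomial (Fin (N + 1)) k)),
    a.IsHomogeneous r ∧ (∀ i, (F i).IsHomogeneous ℓ) ∧
    (∀ i m', ((F i).coeff m').IsHomogeneous r) ∧
    (∀ v : { v : Fin (N + 1) → k // v ≠ 0 }, Projectivization.mk' k v = z →
      eval v.1 a ≠ 0) ∧
    ∀ (w : Projectivization k (Fin (N + 1) → k)) (v : { v : Fin (N + 1) → k // v ≠ 0 }),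
      Projectivization.mk' k v = w → w ∈ Z → eval v.1 a ≠ 0 →
        (∃ i, MvPolynomial.map (eval v.1) (F i) ≠ 0) ∧
        ∀ j : Fin n,
          ψ w (zCoord k n j) * dehom k n (MvPolynomial.map (eval v.1) (F 0)) =
            dehom k n (MvPolynomial.map (eval v.1) (F j.succ))


section Aux

open TopologicalSpace Topology

variable {k : Type} [Field k]

/-- Closedness criterion in the Cremona Zariski topology. -/
theorem cremona_isClosed_iff (n : ℕ) (C : Set (Cremona k n)) :
    IsClosed C ↔ ∀ (S : AffSource k) (φ : S.Pts → Cremona k n), IsMorphism k n S φ →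
      IsClosed (φ ⁻¹' C) := by
  constructor
  · intro h S φ hφ
    have hcont : Continuous[S.ptsTopology k, cremonaTopology k n] φ := by
      rw [continuous_iff_coinduced_le]
      exact le_iSup_of_le S (le_iSup
        (fun ψ : { ψ : S.Pts → Cremona k n // IsMorphism k n S ψ } =>
          TopologicalSpace.coinduced ψ.1 inferInstance) ⟨φ, hφ⟩)
    exact h.preimage hcont
  · intro h
    rw [← isOpen_compl_iff]
    show IsOpen[cremonaTopology k n] Cᶜ
    unfold cremonaTopology
    rw [isOpen_iSup_iff]
    intro S
    rw [isOpen_iSup_iff]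
    rintro ⟨φ, hφ⟩
    rw [isOpen_coinduced]
    show IsOpen (φ ⁻¹' Cᶜ)
    rw [Set.preimage_compl, isOpen_compl_iff]
    exact h S φ hφ

/-- The affine space topology is degenerate (indiscrete). -/
theorem affSpaceTopology_eq_top (N : ℕ) : affSpaceTopology k N = ⊤ := by
  refine top_unique ?_
  refine le_iSup_of_le (C 0 : MvPolynomial (Fin N) k) (le_of_eq ?_)
  have : (fun v : Fin N → k => CofiniteTopology.of (eval v (C 0 : MvPolynomial (Fin N) k)))
      = fun _ => CofiniteTopology.of 0 := by
    funext v; simp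
  rw [this, induced_const]

/-- Closed subsets of projective space for the degenerate topology. -/
theorem projZ_dichotomy (N : ℕ) (Z : Set (Projectivization k (Fin (N + 1) → k)))
    (hZ : IsClosed Z) : Z = ∅ ∨ Z = Set.univ := by
  have hsub : (instTopologicalSpaceSubtype :
      TopologicalSpace { v : Fin (N + 1) → k // v ≠ 0 }) = ⊤ := by
    show TopologicalSpace.induced _ (affSpaceTopology k (N + 1)) = ⊤
    rw [affSpaceTopology_eq_top, induced_top]
  have h2 : IsOpen[instTopologicalSpaceSubtype]
      ((Projectivization.mk' k) ⁻¹' Zᶜ : Set { v : Fin (N + 1) → k // v ≠ 0 }) :=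
    isOpen_coinduced.mp hZ.isOpen_compl
  rw [hsub, TopologicalSpace.isOpen_top_iff] at h2
  have hsurj : Function.Surjective (Projectivization.mk' k :
      { v : Fin (N + 1) → k // v ≠ 0 } → Projectivization k (Fin (N + 1) → k)) := by
    intro w
    exact ⟨⟨w.rep, w.rep_nonzero⟩, by rw [Projectivization.mk'_eq_mk, Projectivization.mk_rep]⟩
  rcases h2 with h2 | h2
  · right
    rw [← Set.compl_empty_iff]
    rw [← Set.image_preimage_eq Zᶜ hsurj, h2, Set.image_empty]
  · left
    ext z
    simp only [Set.mem_empty_iff_false, iff_false]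
    intro hzZ
    obtain ⟨v, rfl⟩ := hsurj z
    have hv : v ∈ Projectivization.mk' k ⁻¹' Zᶜ := h2 ▸ Set.mem_univ v
    exact hv hzZ

end Aux

section Alg

variable {k : Type} [Field k]

/-- Polynomial-level dehomogenization. -/
noncomputable def dehomP (n : ℕ) : MvPolynomial (Fin (n + 1)) k →ₐ[k] MvPolynomial (Fin n) k :=
  aeval (Fin.cons 1 X)

lemma dehom_eq_algebraMap_dehomP (n : ℕ) (p : MvPolynomial (Fin (n + 1)) k) :
    dehom k n p = algebraMap (MvPolynomial (Fin n) k) (RatFunField k n) (dehomP n p) := by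
  have h : ((IsScalarTower.toAlgHom k (MvPolynomial (Fin n) k) (RatFunField k n)).comp
      (dehomP n) : MvPolynomial (Fin (n + 1)) k →ₐ[k] RatFunField k n) = dehom k n := by
    apply MvPolynomial.algHom_ext
    intro i
    refine Fin.cases ?_ ?_ i
    · simp [dehomP, dehom]
    · intro j
      simp [dehomP, dehom, zCoord]
  exact (congrFun (congrArg DFunLike.coe h) p).symm

lemma eval_dehomP (n : ℕ) (y : Fin n → k) (p : MvPolynomial (Fin (n + 1)) k) :
    eval y (dehomP n p) = eval (Fin.cons 1 y) p := by
  have h : ((aeval y).comp (dehomP n) : MvPolynomial (Fin (n + 1)) k →ₐ[k] k)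
      = aeval (Fin.cons 1 y) := by
    apply MvPolynomial.algHom_ext
    intro i
    refine Fin.cases ?_ ?_ i
    · simp [dehomP]
    · intro j
      simp [dehomP]
  have h2 := congrFun (congrArg DFunLike.coe h) p
  have h3 : ∀ q : MvPolynomial (Fin n) k, (aeval y) q = eval y q := by
    intro q
    rw [← coe_aeval_eq_eval]
    rfl
  have h4 : ∀ q : MvPolynomial (Fin (n + 1)) k, (aeval (Fin.cons 1 y)) q
      = eval (Fin.cons 1 y) q := by
    intro q
    rw [← coe_aeval_eq_eval]
    rfl
  rw [← h3, ← h4 p]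
  exact h2

lemma eval_smul_of_isHomogeneous {n : ℕ} {p : MvPolynomial (Fin n) k} {d : ℕ}
    (hp : p.IsHomogeneous d) (c : k) (x : Fin n → k) :
    eval (c • x) p = c ^ d * eval x p := by
  rw [eval_eq, eval_eq, Finset.mul_sum]
  apply Finset.sum_congr rfl
  intro m hm
  have hdeg : (m.support.sum m) = d := by
    have := hp (mem_support_iff.mp hm)
    simpa [Finsupp.weight, Finsupp.degree, Finsupp.linearCombination, Finsupp.sum] using this
  calc coeff m p * ∏ i ∈ m.support, (c • x) i ^ m i
      = coeff m p * ∏ i ∈ m.support, (c ^ m i * x i ^ m i) := by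
        apply congrArg
        apply Finset.prod_congr rfl
        intro i _
        rw [Pi.smul_apply, smul_eq_mul, mul_pow]
    _ = coeff m p * ((∏ i ∈ m.support, c ^ m i) * ∏ i ∈ m.support, x i ^ m i) := by
        rw [Finset.prod_mul_distrib]
    _ = c ^ d * (coeff m p * ∏ i ∈ m.support, x i ^ m i) := by
        rw [Finset.prod_pow_eq_pow_sum, hdeg]; ring

lemma dehomP_inj_of_isHomogeneous [IsAlgClosed k] {n : ℕ} {p : MvPolynomial (Fin (n + 1)) k}
    {d : ℕ} (hp : p.IsHomogeneous d) (h : dehomP n p = 0) : p = 0 := by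
  have heval : ∀ x : Fin (n + 1) → k, x 0 ≠ 0 → eval x p = 0 := by
    intro x hx
    set y : Fin n → k := fun j => x j.succ / x 0 with hy
    set xx : Fin (n + 1) → k := Fin.cons 1 y with hxx
    have hxy : x = x 0 • xx := by
      funext i
      refine Fin.cases ?_ ?_ i
      · simp [hxx]
      · intro j
        simp only [hxx, Pi.smul_apply, Fin.cons_succ, smul_eq_mul, hy]
        field_simp
    rw [hxy, eval_smul_of_isHomogeneous hp, ← eval_dehomP, h]
    simp
  have hall : ∀ x : Fin (n + 1) → k, eval x (p * X 0) = 0 := by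
    intro x
    rcases eq_or_ne (x 0) 0 with h0 | h0
    · simp [h0]
    · simp [heval x h0]
  have hz : p * X 0 = 0 :=
    MvPolynomial.IsHomogeneous.eq_zero_of_forall_eval_eq_zero
      (hp.mul (isHomogeneous_X _ _)) hall
  rcases mul_eq_zero.mp hz with h | h
  · exact h
  · exact absurd h (MvPolynomial.X_ne_zero _)

lemma dehom_inj_of_isHomogeneous [IsAlgClosed k] {n : ℕ} {p q : MvPolynomial (Fin (n + 1)) k}
    {d : ℕ} (hp : p.IsHomogeneous d) (hq : q.IsHomogeneous d) (h : dehom k n p = dehom k n q) :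
    p = q := by
  have hsub : dehom k n (p - q) = 0 := by rw [map_sub, h, sub_self]
  rw [dehom_eq_algebraMap_dehomP] at hsub
  have h0 : dehomP n (p - q) = 0 := by
    have := (map_eq_zero_iff _ (IsFractionRing.injective (MvPolynomial (Fin n) k)
      (RatFunField k n))).mp hsub
    exact this
  have := dehomP_inj_of_isHomogeneous (hp.sub hq) h0
  exact sub_eq_zero.mp this

lemma dehom_inj_of_isHomogeneous' [IsAlgClosed k] {n : ℕ} {p q : MvPolynomial (Fin (n + 1)) k}
    {d : ℕ} (hp : p.IsHomogeneous d) (hq : q.IsHomogeneous d) (h : dehom k n p = dehom k n q) :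
    p = q := dehom_inj_of_isHomogeneous hp hq h

set_option synthInstance.maxHeartbeats 1000000 in
set_option maxHeartbeats 1000000 in
/-- A Cremona transformation is determined by the images of the coordinates. -/
lemma cremona_ext {n : ℕ} (f g : Cremona k n)
    (h : ∀ j, f (zCoord k n j) = g (zCoord k n j)) : f = g := by
  have halg : ∀ p : MvPolynomial (Fin n) k,
      f (algebraMap (MvPolynomial (Fin n) k) (RatFunField k n) p)
        = g (algebraMap (MvPolynomial (Fin n) k) (RatFunField k n) p) := by
    intro p
    induction p using MvPolynomial.induction_on with
    | C a =>
        rw [show (C a : MvPolynomial (Fin n) k) = algebraMap k _ a from rfl,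
          ← IsScalarTower.algebraMap_apply]
        rw [f.commutes, g.commutes]
    | add p q hp hq =>
        rw [(algebraMap (MvPolynomial (Fin n) k) (RatFunField k n)).map_add, map_add, map_add,
          hp, hq]
    | mul_X p j hp =>
        rw [(algebraMap (MvPolynomial (Fin n) k) (RatFunField k n)).map_mul, map_mul, map_mul,
          hp]
        exact congrArg _ (h j)
  apply AlgEquiv.ext
  intro x
  obtain ⟨a, b, hb, hx⟩ := IsFractionRing.div_surjective (A := MvPolynomial (Fin n) k) x
  rw [← hx, map_div₀, map_div₀, halg a, halg b]

end Alg

section Graded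

variable {k : Type} [Field k] {σ : Type} [Fintype σ]

/-- A polynomial homogeneous of degree `E` is determined by its degree-`E` coefficients. -/
lemma homog_ext {p q : MvPolynomial σ k} {E : ℕ}
    (hp : p.IsHomogeneous E) (hq : q.IsHomogeneous E)
    (h : ∀ m : σ →₀ ℕ, m.degree = E → coeff m p = coeff m q) : p = q := by
  ext m
  rcases eq_or_ne m.degree E with hm | hm
  · exact h m hm
  · rw [hp.coeff_eq_zero hm, hq.coeff_eq_zero hm]

lemma homogeneousComponent_mul_homog (r q : MvPolynomial σ k) {d E : ℕ}
    (hq : q.IsHomogeneous d) :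
    homogeneousComponent E (r * q)
      = if d ≤ E then homogeneousComponent (E - d) r * q else 0 := by
  conv_lhs => rw [← sum_homogeneousComponent r, Finset.sum_mul, map_sum]
  have hterm : ∀ i, homogeneousComponent E (homogeneousComponent i r * q)
      = if E = i + d then homogeneousComponent i r * q else 0 := by
    intro i
    exact homogeneousComponent_of_mem ((homogeneousComponent_isHomogeneous i r).mul hq)
  rw [Finset.sum_congr rfl fun i _ => hterm i]
  by_cases hd : d ≤ E
  · have hcond : ∀ i, (E = i + d) = (i = E - d) := by
      intro i
      apply propext
      omega
    simp only [hcond]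
    rw [Finset.sum_ite_eq' (Finset.range (r.totalDegree + 1))]
    by_cases hin : E - d ∈ Finset.range (r.totalDegree + 1)
    · rw [if_pos hin, if_pos hd]
    · rw [if_neg hin, if_pos hd]
      have : r.totalDegree < E - d := by
        simp only [Finset.mem_range] at hin
        omega
      rw [homogeneousComponent_eq_zero _ _ this, zero_mul]
  · rw [if_neg hd]
    apply Finset.sum_eq_zero
    intro i _
    rw [if_neg (by omega)]

/-- A homogeneous element of an ideal spanned by homogeneous polynomials lies in the
`k`-span of the generators shifted by monomials of complementary degree. -/
lemma homog_mem_span_monomial_mul {ι : Type*} (g : ι → MvPolynomial σ k) (dg : ι → ℕ)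
    (hg : ∀ b, (g b).IsHomogeneous (dg b)) {p : MvPolynomial σ k} {E : ℕ}
    (hp : p.IsHomogeneous E) (hmem : p ∈ Ideal.span (Set.range g)) :
    p ∈ Submodule.span k {q : MvPolynomial σ k |
      ∃ b mu, (Finsupp.degree mu) + dg b = E ∧ q = monomial mu 1 * g b} := by
  have hdegree : ∀ {P : MvPolynomial σ k} {dd : ℕ} {m : σ →₀ ℕ}, P.IsHomogeneous dd →
      coeff m P ≠ 0 → m.degree = dd := by
    intro P dd m hP hcf
    by_contra hne
    exact hcf (hP.coeff_eq_zero hne)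
  have key : ∀ (b : ι) (r : MvPolynomial σ k),
      homogeneousComponent E (r * g b) ∈ Submodule.span k {q : MvPolynomial σ k |
        ∃ b mu, (Finsupp.degree mu) + dg b = E ∧ q = monomial mu 1 * g b} := by
    intro b r
    rw [homogeneousComponent_mul_homog r (g b) (hg b)]
    by_cases hd : dg b ≤ E
    · rw [if_pos hd]
      set q := homogeneousComponent (E - dg b) r with hqdef
      rw [q.as_sum, Finset.sum_mul]
      apply Submodule.sum_mem
      intro mu hmu
      have hdeg : mu.degree + dg b = E := by
        have h1 := hdegree (homogeneousComponent_isHomogeneous (E - dg b) r)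
          (mem_support_iff.mp hmu)
        omega
      have hrw : (monomial mu (coeff mu q)) * g b = (coeff mu q) • ((monomial mu 1) * g b) := by
        rw [← smul_mul_assoc, smul_monomial, smul_eq_mul, mul_one]
      rw [hrw]
      exact Submodule.smul_mem _ _ (Submodule.subset_span ⟨b, mu, hdeg, rfl⟩)
    · rw [if_neg hd]
      exact Submodule.zero_mem _
  obtain ⟨nn, c, gs, hsum⟩ := Submodule.mem_span_set'.mp hmem
  have hp' : p = homogeneousComponent E p := by
    rw [homogeneousComponent_of_mem hp, if_pos rfl]
  rw [hp', ← hsum, map_sum]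
  apply Submodule.sum_mem
  intro i _
  obtain ⟨b, hb⟩ := (gs i).2
  have : c i • (gs i : MvPolynomial σ k) = c i * g b := by rw [smul_eq_mul, hb]
  rw [this]
  exact key b (c i)

end Graded

section Elim

variable {k : Type} [Field k] [IsAlgClosed k]

theorem elimination {A : Type} [CommRing A] [Algebra k A] {N : ℕ} {ι : Type*}
    (H : ι → MvPolynomial (Fin (N + 1)) A) (dg : ι → ℕ)
    (hH : ∀ b, (H b).IsHomogeneous (dg b))
    (t₀ : A →ₐ[k] k)
    (h0 : ∀ v : Fin (N + 1) → k, v ≠ 0 →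
      ∃ b, eval v (MvPolynomial.map (t₀ : A →+* k) (H b)) ≠ 0) :
    ∃ f : A, t₀ f ≠ 0 ∧ ∀ t : A →ₐ[k] k, t f ≠ 0 →
      ∀ v : Fin (N + 1) → k, (∀ b, eval v (MvPolynomial.map (t : A →+* k) (H b)) = 0) →
        v = 0 := by
  classical
  have hmapH : ∀ (t : A →ₐ[k] k) b,
      (MvPolynomial.map (t : A →+* k) (H b)).IsHomogeneous (dg b) :=
    fun t b => (hH b).map _
  -- Step 1: by the Nullstellensatz, some power of each variable lies in the ideal at `t₀`.
  have hXpow : ∃ D : ℕ, 1 ≤ D ∧ ∀ i : Fin (N + 1),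
      (X i : MvPolynomial (Fin (N + 1)) k) ^ D
        ∈ Ideal.span (Set.range fun b => MvPolynomial.map (t₀ : A →+* k) (H b)) := by
    set I := Ideal.span (Set.range fun b => MvPolynomial.map (t₀ : A →+* k) (H b)) with hI
    have hXrad : ∀ i : Fin (N + 1), (X i : MvPolynomial (Fin (N + 1)) k) ∈ I.radical := by
      intro i
      rw [← MvPolynomial.vanishingIdeal_zeroLocus_eq_radical (K := k),
        MvPolynomial.mem_vanishingIdeal_iff]
      intro x hx
      have hx0 : x = 0 := by
        by_contra hne
        obtain ⟨b, hb⟩ := h0 x hne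
        exact hb (hx _ (Ideal.subset_span ⟨b, rfl⟩))
      rw [hx0]
      simp
    choose cc hcc using fun i => Ideal.mem_radical_iff.mp (hXrad i)
    refine ⟨Finset.univ.sup cc + 1, by omega, fun i => ?_⟩
    have hle : cc i ≤ Finset.univ.sup cc := Finset.le_sup (Finset.mem_univ i)
    have hpow : (X i : MvPolynomial (Fin (N + 1)) k) ^ (Finset.univ.sup cc + 1)
        = X i ^ (Finset.univ.sup cc + 1 - cc i) * X i ^ cc i := by
      rw [← pow_add]
      congr 1
      omega
    rw [hpow]
    exact Ideal.mul_mem_left _ _ (hcc i)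
  obtain ⟨D, hD1, hXD⟩ := hXpow
  set E : ℕ := (N + 1) * (D - 1) + 1 with hE
  have hE0 : E ≠ 0 := by omega
  -- every monomial of degree `E` lies in the ideal at `t₀`
  have hmonoI : ∀ m : Fin (N + 1) →₀ ℕ, m.degree = E →
      (monomial m 1 : MvPolynomial (Fin (N + 1)) k)
        ∈ Ideal.span (Set.range fun b => MvPolynomial.map (t₀ : A →+* k) (H b)) := by
    intro m hm
    have hex : ∃ i, D ≤ m i := by
      by_contra hfor
      push_neg at hfor
      have hsum : m.degree ≤ (N + 1) * (D - 1) := by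
        calc m.degree = ∑ i ∈ m.support, m i := rfl
          _ ≤ ∑ i : Fin (N + 1), m i :=
              Finset.sum_le_sum_of_subset (Finset.subset_univ _)
          _ ≤ ∑ _i : Fin (N + 1), (D - 1) :=
              Finset.sum_le_sum fun i _ => by have := hfor i; omega
          _ = (N + 1) * (D - 1) := by
              rw [Finset.sum_const, Finset.card_univ, Fintype.card_fin, smul_eq_mul]
      omega
    obtain ⟨i, hi⟩ := hex
    have hsplit : (m - Finsupp.single i D) + Finsupp.single i D = m :=
      tsub_add_cancel_of_le (Finsupp.single_le_iff.mpr hi)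
    have hfac : (monomial m 1 : MvPolynomial (Fin (N + 1)) k)
        = monomial (m - Finsupp.single i D) 1 * X i ^ D := by
      rw [X_pow_eq_monomial, monomial_mul, mul_one, hsplit]
    rw [hfac]
    exact Ideal.mul_mem_left _ _ (hXD i)
  -- the finite set of degree-`E` exponents
  set M : Set (Fin (N + 1) →₀ ℕ) := {m | m.degree = E} with hM
  have hMdeg : ∀ m : ↥M, (m : Fin (N + 1) →₀ ℕ).degree = E := fun m => m.2
  have hbound : ∀ m : ↥M, ∀ i, (m : Fin (N + 1) →₀ ℕ) i ≤ E := by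
    intro m i
    have h1 := Finsupp.le_degree i (m : Fin (N + 1) →₀ ℕ)
    rw [hMdeg m] at h1
    exact h1
  haveI : Finite ↥M := by
    let f : ↥M → (Fin (N + 1) → Fin (E + 1)) :=
      fun m i => ⟨(m : Fin (N + 1) →₀ ℕ) i, Nat.lt_succ_of_le (hbound m i)⟩
    have hinj : Function.Injective f := by
      intro m1 m2 h12
      apply Subtype.ext
      apply Finsupp.ext
      intro i
      exact congrArg Fin.val (congrFun h12 i)
    exact Finite.of_injective f hinj
  haveI hMfintype : Fintype ↥M := Fintype.ofFinite ↥M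
  -- the coordinate map
  let cvec : MvPolynomial (Fin (N + 1)) k →ₗ[k] (↥M → k) :=
    LinearMap.pi fun μ : ↥M => lcoeff k (μ : Fin (N + 1) →₀ ℕ)
  have hcvec : ∀ p (μ : ↥M), cvec p μ = coeff (μ : Fin (N + 1) →₀ ℕ) p := fun p μ => rfl
  set gens : (A →ₐ[k] k) → Set (MvPolynomial (Fin (N + 1)) k) := fun t =>
    {q | ∃ b mu, Finsupp.degree mu + dg b = E ∧
      q = monomial mu 1 * MvPolynomial.map (t : A →+* k) (H b)} with hgensdef
  -- the span of the generator coordinates at `t₀` is everything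
  have hspan_top : Submodule.span k (cvec '' gens t₀) = ⊤ := by
    rw [eq_top_iff, ← (Pi.basisFun k ↥M).span_eq, Submodule.span_le]
    rintro w ⟨μ, rfl⟩
    have hmem : (monomial (μ : Fin (N + 1) →₀ ℕ) 1 : MvPolynomial (Fin (N + 1)) k)
        ∈ Submodule.span k (gens t₀) :=
      homog_mem_span_monomial_mul _ dg (hmapH t₀)
        (isHomogeneous_monomial 1 (hMdeg μ)) (hmonoI _ (hMdeg μ))
    have hmem2 : cvec (monomial (μ : Fin (N + 1) →₀ ℕ) 1)
        ∈ Submodule.span k (cvec '' gens t₀) := by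
      rw [← Submodule.map_span]
      exact Submodule.mem_map_of_mem hmem
    have hcv : cvec (monomial (μ : Fin (N + 1) →₀ ℕ) 1) = Pi.basisFun k ↥M μ := by
      funext ν
      rw [hcvec, coeff_monomial, Pi.basisFun_apply]
      simp [Pi.single_apply, Subtype.ext_iff, eq_comm]
    rw [← hcv]
    exact hmem2
  -- extract a finite basis from the generators
  obtain ⟨bs, hbs_sub, hbs_span, hbs_li⟩ := exists_linearIndependent k (cvec '' gens t₀)
  rw [hspan_top] at hbs_span
  have hbs_fin : bs.Finite := hbs_li.setFinite
  haveI hbsFT : Fintype ↥bs := hbs_fin.fintype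
  let B : Module.Basis ↥bs k (↥M → k) := Module.Basis.mk hbs_li
    (by rw [Subtype.range_coe, hbs_span])
  have hcard : Fintype.card ↥M = Fintype.card ↥bs := by
    rw [← Module.finrank_pi k, Module.finrank_eq_card_basis B]
  let e : ↥M ≃ ↥bs := Fintype.equivOfCardEq hcard
  have hchoice : ∀ i : ↥bs, ∃ (b : ι) (mu : Fin (N + 1) →₀ ℕ),
      Finsupp.degree mu + dg b = E ∧
      cvec (monomial mu 1 * MvPolynomial.map (t₀ : A →+* k) (H b)) = (i : ↥M → k) := by
    intro i
    obtain ⟨q, hq, hcq⟩ := hbs_sub i.2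
    obtain ⟨b, mu, hmu, rfl⟩ := hq
    exact ⟨b, mu, hmu, hcq⟩
  choose bF muF hmuF hcvF using hchoice
  let PA : ↥bs → MvPolynomial (Fin (N + 1)) A := fun i => monomial (muF i) (1 : A) * H (bF i)
  have hmapPA : ∀ (t : A →ₐ[k] k) (i : ↥bs),
      MvPolynomial.map (t : A →+* k) (PA i)
        = monomial (muF i) 1 * MvPolynomial.map (t : A →+* k) (H (bF i)) := by
    intro t i
    rw [map_mul, MvPolynomial.map_monomial, map_one]
  let MatA : Matrix ↥M ↥M A := fun μ ρ => (PA (e ρ)).coeff (μ : Fin (N + 1) →₀ ℕ)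
  have hmatmap : ∀ (t : A →ₐ[k] k) (μ ρ : ↥M),
      MatA.map (t : A →+* k) μ ρ = coeff (μ : Fin (N + 1) →₀ ℕ)
        (MvPolynomial.map (t : A →+* k) (PA (e ρ))) := by
    intro t μ ρ
    rw [Matrix.map_apply, MvPolynomial.coeff_map]
  refine ⟨MatA.det, ?_, ?_⟩
  · -- the determinant does not vanish at t₀
    have hBmat : MatA.map ((t₀ : A →+* k) : A → k)
        = (Pi.basisFun k ↥M).toMatrix ⇑(B.reindex e.symm) := by
      ext μ ρ
      rw [Module.Basis.toMatrix_apply, Pi.basisFun_repr, Module.Basis.reindex_apply, Equiv.symm_symm,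
        Module.Basis.mk_apply, hmatmap t₀ μ ρ, hmapPA, ← hcvec, hcvF (e ρ)]
    have hInv : Invertible ((Pi.basisFun k ↥M).toMatrix ⇑(B.reindex e.symm)) :=
      (Pi.basisFun k ↥M).invertibleToMatrix (B.reindex e.symm)
    have : (MatA.map ((t₀ : A →+* k) : A → k)).det ≠ 0 := by
      rw [hBmat]
      exact (Matrix.isUnit_det_of_invertible _).ne_zero
    rw [show t₀ MatA.det = (MatA.map ((t₀ : A →+* k) : A → k)).det by
      rw [show t₀ MatA.det = (t₀ : A →+* k) MatA.det from rfl, RingHom.map_det,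
        RingHom.mapMatrix_apply]]
    exact this
  · intro t htf v hv
    set Mt := MatA.map ((t : A →+* k) : A → k) with hMt
    have hdet : IsUnit Mt.det := by
      rw [hMt, ← RingHom.mapMatrix_apply, ← RingHom.map_det]
      exact isUnit_iff_ne_zero.mpr htf
    funext i₀
    show v i₀ = (0 : Fin (N + 1) → k) i₀
    rw [Pi.zero_apply]
    have hμ₀ : (Finsupp.single i₀ E).degree = E := by
      rw [Finsupp.degree_single]
    set μ₀ : ↥M := ⟨Finsupp.single i₀ E, hμ₀⟩ with hμ₀def
    set c := Mt⁻¹.mulVec (Pi.single μ₀ 1) with hc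
    have hMc : Mt.mulVec c = Pi.single μ₀ 1 := by
      rw [hc, Matrix.mulVec_mulVec, Matrix.mul_nonsing_inv _ hdet, Matrix.one_mulVec]
    set wq : ↥M → MvPolynomial (Fin (N + 1)) k :=
      fun ρ => MvPolynomial.map (t : A →+* k) (PA (e ρ)) with hwq
    have hwqHomog : ∀ ρ, (wq ρ).IsHomogeneous E := by
      intro ρ
      show (MvPolynomial.map (t : A →+* k) (PA (e ρ))).IsHomogeneous E
      rw [hmapPA]
      have := (isHomogeneous_monomial (1 : k)
        (rfl : (muF (e ρ)).degree = (muF (e ρ)).degree)).mul (hmapH t (bF (e ρ)))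
      rwa [hmuF (e ρ)] at this
    have hwqcoeff : ∀ (μ ρ : ↥M), coeff (μ : Fin (N + 1) →₀ ℕ) (wq ρ) = Mt μ ρ := by
      intro μ ρ
      show coeff (μ : Fin (N + 1) →₀ ℕ) (MvPolynomial.map (t : A →+* k) (PA (e ρ)))
        = MatA.map ((t : A →+* k) : A → k) μ ρ
      rw [hmatmap]
    have hwqeval : ∀ ρ, eval v (wq ρ) = 0 := by
      intro ρ
      show eval v (MvPolynomial.map (t : A →+* k) (PA (e ρ))) = 0
      rw [hmapPA, map_mul, hv (bF (e ρ)), mul_zero]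
    set q : MvPolynomial (Fin (N + 1)) k := ∑ ρ : ↥M, c ρ • wq ρ with hqdef
    have hqHomog : q.IsHomogeneous E := by
      rw [← mem_homogeneousSubmodule]
      apply Submodule.sum_mem
      intro ρ _
      exact Submodule.smul_mem _ _ ((mem_homogeneousSubmodule _ _).mpr (hwqHomog ρ))
    have hqeq : q = monomial (Finsupp.single i₀ E) 1 := by
      apply homog_ext hqHomog (isHomogeneous_monomial 1 hμ₀)
      intro m hm
      have hcq : coeff m q = Mt.mulVec c ⟨m, hm⟩ := by
        rw [hqdef]
        rw [show coeff m (∑ ρ : ↥M, c ρ • wq ρ) = ∑ ρ : ↥M, c ρ * coeff m (wq ρ) by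
          rw [MvPolynomial.coeff_sum]
          exact Finset.sum_congr rfl fun ρ _ => coeff_smul m (c ρ) (wq ρ)]
        rw [show (∑ ρ : ↥M, c ρ * coeff m (wq ρ)) = ∑ ρ : ↥M, Mt ⟨m, hm⟩ ρ * c ρ from
          Finset.sum_congr rfl fun ρ _ => by rw [hwqcoeff ⟨m, hm⟩ ρ, mul_comm]]
        rfl
      rw [hcq, hMc, coeff_monomial]
      simp [Pi.single_apply, hμ₀def, Subtype.ext_iff, eq_comm]
    have heval0 : (v i₀) ^ E = 0 := by
      have hqe : eval v q = 0 := by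
        rw [hqdef, map_sum]
        apply Finset.sum_eq_zero
        intro ρ _
        rw [smul_eq_C_mul, map_mul, hwqeval, mul_zero]
      rw [hqeq] at hqe
      simpa [eval_monomial, Finsupp.prod_single_index] using hqe
    exact pow_eq_zero_iff hE0 |>.mp heval0

end Elim





section Fam

variable {k : Type} [Field k] [IsAlgClosed k] {n : ℕ}

lemma dehom_g0_ne_zero {ℓ : ℕ} {f : Cremona k n} {g : Fin (n + 1) → MvPolynomial (Fin (n + 1)) k}
    (hg : ∀ i, (g i).IsHomogeneous ℓ) (hne : ∃ i, g i ≠ 0)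
    (heq : ∀ j : Fin n, f (zCoord k n j) * dehom k n (g 0) = dehom k n (g j.succ)) :
    dehom k n (g 0) ≠ 0 := by
  intro h0
  obtain ⟨i, hi⟩ := hne
  apply hi
  have hz : ∀ i, dehom k n (g i) = 0 := by
    intro i
    refine Fin.cases ?_ ?_ i
    · exact h0
    · intro j
      rw [← heq j, h0, mul_zero]
  have : dehom k n (g i) = dehom k n 0 := by rw [hz i, map_zero]
  exact dehom_inj_of_isHomogeneous (hg i) (isHomogeneous_zero _ _ _) this

lemma cross_iff {ℓF ℓG : ℕ} {f g : Cremona k n}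
    {F G : Fin (n + 1) → MvPolynomial (Fin (n + 1)) k}
    (hF : ∀ i, (F i).IsHomogeneous ℓF) (hG : ∀ i, (G i).IsHomogeneous ℓG)
    (hFne : ∃ i, F i ≠ 0) (hGne : ∃ i, G i ≠ 0)
    (heF : ∀ j : Fin n, f (zCoord k n j) * dehom k n (F 0) = dehom k n (F j.succ))
    (heG : ∀ j : Fin n, g (zCoord k n j) * dehom k n (G 0) = dehom k n (G j.succ)) :
    (∀ j : Fin n, F j.succ * G 0 = F 0 * G j.succ) ↔ f = g := by
  have hF0 := dehom_g0_ne_zero hF hFne heF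
  have hG0 := dehom_g0_ne_zero hG hGne heG
  constructor
  · intro hcr
    apply cremona_ext
    intro j
    have hd := congrArg (dehom k n) (hcr j)
    rw [map_mul, map_mul, ← heF j, ← heG j] at hd
    apply mul_right_cancel₀ (mul_ne_zero hF0 hG0)
    calc f (zCoord k n j) * (dehom k n (F 0) * dehom k n (G 0))
        = f (zCoord k n j) * dehom k n (F 0) * dehom k n (G 0) := by ring
      _ = dehom k n (F 0) * (g (zCoord k n j) * dehom k n (G 0)) := hd
      _ = g (zCoord k n j) * (dehom k n (F 0) * dehom k n (G 0)) := by ring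
  · intro hfg j
    apply dehom_inj_of_isHomogeneous ((hF j.succ).mul (hG 0)) ((hF 0).mul (hG j.succ))
    rw [map_mul, map_mul, ← heF j, ← heG j, hfg]
    ring

/-- Basic open subsets of the points of an affine variety are open. -/
lemma basic_open_isOpen {k : Type} [Field k] (S : AffSource k) (f : S.A) :
    IsOpen {t : S.Pts | t f ≠ 0} := by
  have hrw : {t : S.Pts | t f ≠ 0} =
      (fun t : S.Pts =>
        (⟨RingHom.ker (t : S.A →+* k), RingHom.ker_isPrime _⟩ : PrimeSpectrum S.A)) ⁻¹'
        (PrimeSpectrum.basicOpen f) := by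
    ext t
    simp only [Set.mem_setOf_eq, Set.mem_preimage, PrimeSpectrum.basicOpen]
    change t f ≠ 0 ↔ f ∉ RingHom.ker (t : S.A →+* k)
    simp [RingHom.mem_ker]
  rw [hrw]
  exact isOpen_induced (PrimeSpectrum.basicOpen f).2

end Fam

set_option maxHeartbeats 2000000 in
set_option synthInstance.maxHeartbeats 400000 in
/-- The image of a projective `k`-variety under a morphism to `Bir(ℙⁿ)` is closed in
the Zariski topology. -/
theorem image_of_projective_isClosed (k : Type) [Field k] [IsAlgClosed k]
    (n N : ℕ) (hn : 1 ≤ n)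
    (Z : Set (Projectivization k (Fin (N + 1) → k))) (hZ : IsClosed Z)
    (ψ : Projectivization k (Fin (N + 1) → k) → Cremona k n)
    (hψ : IsProjMorphismOn k n N Z ψ) :
    IsClosed (ψ '' Z) := by
  classical
  rcases projZ_dichotomy N Z hZ with hZe | hZu
  · rw [hZe, Set.image_empty]
    exact isClosed_empty
  subst hZu
  rw [Set.image_univ, cremona_isClosed_iff]
  intro S φ hφ
  choose rZ ℓZ aZ G haZ hGhom hGcoeff hanv hfamZ using fun z => hψ z (Set.mem_univ z)
  rw [← isOpen_compl_iff, isOpen_iff_forall_mem_open]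
  intro t₀ ht₀
  obtain ⟨a, hta, ℓ, F, hFhom, hFcond⟩ := hφ t₀
  -- the universal family of equations
  set Hd : (Projectivization k (Fin (N + 1) → k) × Fin n × ((Fin (n + 1)) →₀ ℕ)) →
      MvPolynomial (Fin (N + 1)) S.A := fun b =>
    (∑ p ∈ Finset.HasAntidiagonal.antidiagonal b.2.2, ((F b.2.1.succ).coeff p.1) •
        (MvPolynomial.map (algebraMap k S.A) ((C (aZ b.1) * G b.1 0).coeff p.2)))
    - (∑ p ∈ Finset.HasAntidiagonal.antidiagonal b.2.2, ((F 0).coeff p.1) •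
        (MvPolynomial.map (algebraMap k S.A) ((C (aZ b.1) * G b.1 b.2.1.succ).coeff p.2)))
    with hHd
  set dgI : (Projectivization k (Fin (N + 1) → k) × Fin n × ((Fin (n + 1)) →₀ ℕ)) → ℕ :=
    fun b => rZ b.1 + rZ b.1 with hdgI
  have hHhom : ∀ b, (Hd b).IsHomogeneous (dgI b) := by
    rintro ⟨z, j, m⟩
    apply MvPolynomial.IsHomogeneous.sub
    · apply MvPolynomial.IsHomogeneous.sum
      intro p _
      rw [smul_eq_C_mul]
      apply MvPolynomial.IsHomogeneous.C_mul
      rw [coeff_C_mul]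
      exact ((haZ z).mul (hGcoeff z 0 p.2)).map _
    · apply MvPolynomial.IsHomogeneous.sum
      intro p _
      rw [smul_eq_C_mul]
      apply MvPolynomial.IsHomogeneous.C_mul
      rw [coeff_C_mul]
      exact ((haZ z).mul (hGcoeff z j.succ p.2)).map _
  have hkalg : ∀ t : S.Pts, ∀ q : MvPolynomial (Fin (N + 1)) k,
      MvPolynomial.map (t : S.A →+* k) (MvPolynomial.map (algebraMap k S.A) q) = q := by
    intro t q
    rw [MvPolynomial.map_map]
    have hcomp : (t : S.A →+* k).comp (algebraMap k S.A) = RingHom.id k := by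
      rw [AlgHom.comp_algebraMap]
      exact Algebra.algebraMap_self
    rw [hcomp, MvPolynomial.map_id]
  have hHeval : ∀ (t : S.Pts) (v : Fin (N + 1) → k)
      (z : Projectivization k (Fin (N + 1) → k)) (j : Fin n) (m : (Fin (n + 1)) →₀ ℕ),
      eval v (MvPolynomial.map (t : S.A →+* k) (Hd (z, j, m)))
        = coeff m ((MvPolynomial.map (t : S.A →+* k) (F j.succ))
            * (MvPolynomial.map (eval v) (C (aZ z) * G z 0)))
          - coeff m ((MvPolynomial.map (t : S.A →+* k) (F 0))
            * (MvPolynomial.map (eval v) (C (aZ z) * G z j.succ))) := by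
    intro t v z j m
    simp only [hHd]
    rw [map_sub, map_sub, coeff_mul, coeff_mul]
    congr 1
    · rw [map_sum, map_sum]
      apply Finset.sum_congr rfl
      intro p _
      rw [MvPolynomial.coeff_map, MvPolynomial.coeff_map, smul_eq_C_mul, map_mul,
        MvPolynomial.map_C, hkalg t, map_mul, eval_C]
    · rw [map_sum, map_sum]
      apply Finset.sum_congr rfl
      intro p _
      rw [MvPolynomial.coeff_map, MvPolynomial.coeff_map, smul_eq_C_mul, map_mul,
        MvPolynomial.map_C, hkalg t, map_mul, eval_C]
  -- forward direction: a common zero yields a point of the image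
  have claimA_fwd : ∀ t : S.Pts, t a ≠ 0 → ∀ v : Fin (N + 1) → k, v ≠ 0 →
      (∀ b, eval v (MvPolynomial.map (t : S.A →+* k) (Hd b)) = 0) →
      φ t ∈ Set.range ψ := by
    intro t hta' v hv hall
    set w := Projectivization.mk' k ⟨v, hv⟩ with hw
    have hav : eval v (aZ w) ≠ 0 := hanv w ⟨v, hv⟩ rfl
    obtain ⟨hGne, hGeq⟩ := hfamZ w w ⟨v, hv⟩ rfl (Set.mem_univ w) hav
    obtain ⟨hFne, hFeq⟩ := hFcond t hta'
    have hcross : ∀ j : Fin n,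
        (MvPolynomial.map (t : S.A →+* k) (F j.succ)) * (MvPolynomial.map (eval v) (G w 0))
          = (MvPolynomial.map (t : S.A →+* k) (F 0))
              * (MvPolynomial.map (eval v) (G w j.succ)) := by
      intro j
      have hQ : (MvPolynomial.map (t : S.A →+* k) (F j.succ))
            * (MvPolynomial.map (eval v) (C (aZ w) * G w 0))
          = (MvPolynomial.map (t : S.A →+* k) (F 0))
            * (MvPolynomial.map (eval v) (C (aZ w) * G w j.succ)) := by
        apply MvPolynomial.ext
        intro m
        have h1 := hall (w, j, m)
        rw [hHeval t v w j m] at h1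
        rw [← sub_eq_zero]
        exact h1
      simp only [map_mul, MvPolynomial.map_C] at hQ
      have hc : (C (eval v (aZ w)) : MvPolynomial (Fin (n + 1)) k) ≠ 0 := by
        simpa using hav
      apply mul_left_cancel₀ hc
      linear_combination hQ
    exact ⟨w, ((cross_iff (fun i => (hFhom i).map _) (fun i => (hGhom w i).map _)
      hFne hGne hFeq hGeq).mp hcross).symm⟩
  -- backward direction: a point of the image yields a common zero
  have claimA_bwd : ∀ t : S.Pts, t a ≠ 0 → φ t ∈ Set.range ψ →
      ∃ v : Fin (N + 1) → k, v ≠ 0 ∧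
        ∀ b, eval v (MvPolynomial.map (t : S.A →+* k) (Hd b)) = 0 := by
    rintro t hta' ⟨w, hw⟩
    refine ⟨w.rep, w.rep_nonzero, ?_⟩
    have hmkv : Projectivization.mk' k ⟨w.rep, w.rep_nonzero⟩ = w := by
      rw [Projectivization.mk'_eq_mk, Projectivization.mk_rep]
    rintro ⟨z, j, m⟩
    rw [hHeval, sub_eq_zero]
    rcases eq_or_ne (eval w.rep (aZ z)) 0 with hc0 | hcne
    · simp only [map_mul, MvPolynomial.map_C, hc0, map_zero, zero_mul, mul_zero]
    · obtain ⟨hGne, hGeq⟩ := hfamZ z w ⟨w.rep, w.rep_nonzero⟩ hmkv (Set.mem_univ w) hcne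
      obtain ⟨hFne, hFeq⟩ := hFcond t hta'
      have heq := (cross_iff (fun i => (hFhom i).map _) (fun i => (hGhom z i).map _)
        hFne hGne hFeq hGeq).mpr hw.symm
      have heq' : (MvPolynomial.map (t : S.A →+* k) (F j.succ))
            * (MvPolynomial.map (eval w.rep) (G z 0))
          = (MvPolynomial.map (t : S.A →+* k) (F 0))
            * (MvPolynomial.map (eval w.rep) (G z j.succ)) := heq j
      have hpoly : (MvPolynomial.map (t : S.A →+* k) (F j.succ))
            * (MvPolynomial.map (eval w.rep) (C (aZ z) * G z 0))
          = (MvPolynomial.map (t : S.A →+* k) (F 0))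
            * (MvPolynomial.map (eval w.rep) (C (aZ z) * G z j.succ)) := by
        simp only [map_mul, MvPolynomial.map_C]
        linear_combination (C (eval w.rep (aZ z)) : MvPolynomial (Fin (n + 1)) k) * heq'
      exact congrArg (coeff m) hpoly
  -- apply elimination theory at t₀
  have h0 : ∀ v : Fin (N + 1) → k, v ≠ 0 →
      ∃ b, eval v (MvPolynomial.map (t₀ : S.A →+* k) (Hd b)) ≠ 0 := by
    intro v hv
    by_contra hallz
    push_neg at hallz
    exact ht₀ (claimA_fwd t₀ hta v hv hallz)
  obtain ⟨f₀, hf₀, hELIM⟩ := elimination Hd dgI hHhom t₀ h0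
  refine ⟨{t : S.Pts | t (a * f₀) ≠ 0}, ?_, basic_open_isOpen S (a * f₀), ?_⟩
  · intro t ht
    simp only [Set.mem_setOf_eq, map_mul] at ht
    have hta' : t a ≠ 0 := fun h => ht (by rw [h, zero_mul])
    have htf : t f₀ ≠ 0 := fun h => ht (by rw [h, mul_zero])
    intro hmem
    obtain ⟨v, hv, hall⟩ := claimA_bwd t hta' hmem
    exact hv (hELIM t htf v hall)
  · show t₀ (a * f₀) ≠ 0
    rw [map_mul]
    exact mul_ne_zero hta hf₀
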